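/- Let q be any quadratic polynomial on ℝ² with nonzero coefficient vector vanishing at A, B, C, P, Q. Then for every point Y ∈ ℝ²: q vanishes at Y if and only if the three points P, Y, T_P(Y) are collinear. (The conic 𝒞_P is the locus of points Y for which P, Y, and T_P(Y) are collinear.) -/

import Mathlib

set_option maxHeartbeats 4000000

noncomputable section

abbrev Pt := EuclideanSpace ℝ (Fin 2)

/-- The quadratic polynomial `a*x^2 + b*x*y + c*y^2 + d*x + e*y + f` evaluated at a point. -/
def qeval (a b c d e f : ℝ) (W : Pt) : ℝ :=
  a * (W 0)^2 + b * (W 0) * (W 1) + c * (W 1)^2 + d * (W 0) + e * (W 1) + f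

lemma coll_iff (X Z W : Pt) :
    Collinear ℝ ({X, Z, W} : Set Pt) ↔
      (Z 0 - X 0) * (W 1 - X 1) - (Z 1 - X 1) * (W 0 - X 0) = 0 := by
  constructor
  · intro h
    rw [collinear_iff_of_mem (Set.mem_insert X _)] at h
    obtain ⟨u, hu⟩ := h
    obtain ⟨rz, hz⟩ := hu Z (by simp)
    obtain ⟨rw', hw⟩ := hu W (by simp)
    rw [hz, hw]
    simp only [vadd_eq_add, PiLp.add_apply, PiLp.smul_apply, smul_eq_mul]
    ring
  · intro h
    by_cases hZX : Z = X
    · have hset : ({X, Z, W} : Set Pt) = {X, W} := by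
        rw [hZX]; exact Set.insert_idem ..
      rw [hset]; exact collinear_pair ℝ X W
    · have hne : Z 0 - X 0 ≠ 0 ∨ Z 1 - X 1 ≠ 0 := by
        by_contra hc
        push_neg at hc
        apply hZX
        ext i
        fin_cases i
        · simpa [sub_eq_zero] using hc.1
        · simpa [sub_eq_zero] using hc.2
      rw [collinear_iff_of_mem (Set.mem_insert X _)]
      refine ⟨Z - X, ?_⟩
      intro p hp
      simp only [Set.mem_insert_iff, Set.mem_singleton_iff] at hp
      rcases hp with rfl | rfl | rfl
      · exact ⟨0, by simp⟩
      · exact ⟨1, by simp⟩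
      · rcases hne with hx | hy
        · refine ⟨(p 0 - X 0) / (Z 0 - X 0), ?_⟩
          ext i
          fin_cases i
          · simp only [vadd_eq_add, PiLp.add_apply, PiLp.smul_apply, PiLp.sub_apply, smul_eq_mul, Fin.zero_eta, Fin.mk_one]
            field_simp
            ring
          · simp only [vadd_eq_add, PiLp.add_apply, PiLp.smul_apply, PiLp.sub_apply, smul_eq_mul, Fin.zero_eta, Fin.mk_one]
            have h0 : (Z 0 - X 0) * (p 1 - X 1) = (Z 1 - X 1) * (p 0 - X 0) := by linarith [h]
            field_simp
            nlinarith [h0]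
        · refine ⟨(p 1 - X 1) / (Z 1 - X 1), ?_⟩
          ext i
          fin_cases i
          · simp only [vadd_eq_add, PiLp.add_apply, PiLp.smul_apply, PiLp.sub_apply, smul_eq_mul, Fin.zero_eta, Fin.mk_one]
            have h0 : (Z 1 - X 1) * (p 0 - X 0) = (Z 0 - X 0) * (p 1 - X 1) := by linarith [h]
            field_simp
            nlinarith [h0]
          · simp only [vadd_eq_add, PiLp.add_apply, PiLp.smul_apply, PiLp.sub_apply, smul_eq_mul, Fin.zero_eta, Fin.mk_one]
            field_simp
            ring

theorem stmt2
    (A B C : Pt) (hABC : AffineIndependent ℝ ![A, B, C])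
    (α β γ : ℝ) (hsum : α + β + γ = 1)
    (hα : α ≠ 0) (hβ : β ≠ 0) (hγ : γ ≠ 0)
    (hβγ : β + γ ≠ 0) (hγα : γ + α ≠ 0) (hαβ : α + β ≠ 0)
    (hab : α ≠ β) (hbc : β ≠ γ) (hca : γ ≠ α)
    (hs : α * β + β * γ + γ * α ≠ 0)
    (G : Pt) (hG : G = (3:ℝ)⁻¹ • (A + B + C))
    (P : Pt) (hP : P = α • A + β • B + γ • C)
    (P' : Pt)
    (hP'' : P' = (α * β + β * γ + γ * α)⁻¹ • ((β * γ) • A + (γ * α) • B + (α * β) • C))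
    (Q : Pt) (hQ : Q = G - (2:ℝ)⁻¹ • (P' - G))
    (D E F : Pt)
    (hD : D = (β + γ)⁻¹ • (β • B + γ • C))
    (hE : E = (γ + α)⁻¹ • (α • A + γ • C))
    (hF : F = (α + β)⁻¹ • (α • A + β • B))
    (TP : Pt →ᵃ[ℝ] Pt) (hTPA : TP A = D) (hTPB : TP B = E) (hTPC : TP C = F)
    (a b c d e f : ℝ) (hq : (a, b, c, d, e, f) ≠ (0, 0, 0, 0, 0, 0))
    (hqA : qeval a b c d e f A = 0) (hqB : qeval a b c d e f B = 0)
    (hqC : qeval a b c d e f C = 0) (hqP : qeval a b c d e f P = 0)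
    (hqQ : qeval a b c d e f Q = 0)
    :
    ∀ Y : Pt, qeval a b c d e f Y = 0 ↔ Collinear ℝ ({P, Y, TP Y} : Set Pt) := by
  have hγ1 : γ = 1 - α - β := by linarith
  subst hγ1
  simp only [qeval] at hqA hqB hqC hqP hqQ ⊢
  have hP0 : P 0 = α * (A 0) + β * (B 0) + (1 - α - β) * (C 0) := by
    rw [hP]; simp only [PiLp.add_apply, PiLp.smul_apply, smul_eq_mul]
  have hP1 : P 1 = α * (A 1) + β * (B 1) + (1 - α - β) * (C 1) := by
    rw [hP]; simp only [PiLp.add_apply, PiLp.smul_apply, smul_eq_mul]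
  rw [hP0, hP1] at hqP
  have hQ0 : 2 * (α * β + β * (1 - α - β) + (1 - α - β) * α) * (Q 0) = ((α * (β + (1 - α - β))) * (A 0) + (β * ((1 - α - β) + α)) * (B 0) + ((1 - α - β) * (α + β)) * (C 0)) := by
    rw [hQ, hG, hP'']
    simp only [PiLp.sub_apply, PiLp.add_apply, PiLp.smul_apply, smul_eq_mul]
    have hinv := mul_inv_cancel₀ hs
    linear_combination (-((β * (1 - α - β)) * (A 0) + ((1 - α - β) * α) * (B 0) + (α * β) * (C 0))) * hinv
  have hQ1 : 2 * (α * β + β * (1 - α - β) + (1 - α - β) * α) * (Q 1) = ((α * (β + (1 - α - β))) * (A 1) + (β * ((1 - α - β) + α)) * (B 1) + ((1 - α - β) * (α + β)) * (C 1)) := by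
    rw [hQ, hG, hP'']
    simp only [PiLp.sub_apply, PiLp.add_apply, PiLp.smul_apply, smul_eq_mul]
    have hinv := mul_inv_cancel₀ hs
    linear_combination (-((β * (1 - α - β)) * (A 1) + ((1 - α - β) * α) * (B 1) + (α * β) * (C 1))) * hinv
  have hqQ2 : a * ((α * (β + (1 - α - β))) * (A 0) + (β * ((1 - α - β) + α)) * (B 0) + ((1 - α - β) * (α + β)) * (C 0)) ^ 2 + b * ((α * (β + (1 - α - β))) * (A 0) + (β * ((1 - α - β) + α)) * (B 0) + ((1 - α - β) * (α + β)) * (C 0)) * ((α * (β + (1 - α - β))) * (A 1) + (β * ((1 - α - β) + α)) * (B 1) + ((1 - α - β) * (α + β)) * (C 1)) + c * ((α * (β + (1 - α - β))) * (A 1) + (β * ((1 - α - β) + α)) * (B 1) + ((1 - α - β) * (α + β)) * (C 1)) ^ 2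
      + 2 * (α * β + β * (1 - α - β) + (1 - α - β) * α) * (d * ((α * (β + (1 - α - β))) * (A 0) + (β * ((1 - α - β) + α)) * (B 0) + ((1 - α - β) * (α + β)) * (C 0)) + e * ((α * (β + (1 - α - β))) * (A 1) + (β * ((1 - α - β) + α)) * (B 1) + ((1 - α - β) * (α + β)) * (C 1))) + 4 * (α * β + β * (1 - α - β) + (1 - α - β) * α) ^ 2 * f = 0 := by
    linear_combination (4 * (α * β + β * (1 - α - β) + (1 - α - β) * α) ^ 2) * hqQ
      + (-(a * (((α * (β + (1 - α - β))) * (A 0) + (β * ((1 - α - β) + α)) * (B 0) + ((1 - α - β) * (α + β)) * (C 0)) + 2 * (α * β + β * (1 - α - β) + (1 - α - β) * α) * (Q 0))) - 2 * (α * β + β * (1 - α - β) + (1 - α - β) * α) * b * (Q 1) - 2 * (α * β + β * (1 - α - β) + (1 - α - β) * α) * d) * hQ0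
      + (-(b * ((α * (β + (1 - α - β))) * (A 0) + (β * ((1 - α - β) + α)) * (B 0) + ((1 - α - β) * (α + β)) * (C 0))) - c * (((α * (β + (1 - α - β))) * (A 1) + (β * ((1 - α - β) + α)) * (B 1) + ((1 - α - β) * (α + β)) * (C 1)) + 2 * (α * β + β * (1 - α - β) + (1 - α - β) * α) * (Q 1)) - 2 * (α * β + β * (1 - α - β) + (1 - α - β) * α) * e) * hQ1
  obtain ⟨a', ha'⟩ : ∃ x : ℝ, x = (a * ((A 0) + 2 * ((B 0) - (A 0)) + 0 * ((C 0) - (A 0))) ^ 2 + b * ((A 0) + 2 * ((B 0) - (A 0)) + 0 * ((C 0) - (A 0))) * ((A 1) + 2 * ((B 1) - (A 1)) + 0 * ((C 1) - (A 1))) + c * ((A 1) + 2 * ((B 1) - (A 1)) + 0 * ((C 1) - (A 1))) ^ 2 + d * ((A 0) + 2 * ((B 0) - (A 0)) + 0 * ((C 0) - (A 0))) + e * ((A 1) + 2 * ((B 1) - (A 1)) + 0 * ((C 1) - (A 1))) + f) / 2 := ⟨_, rfl⟩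
  obtain ⟨b', hb'⟩ : ∃ x : ℝ, x = (a * ((A 0) + 1 * ((B 0) - (A 0)) + 1 * ((C 0) - (A 0))) ^ 2 + b * ((A 0) + 1 * ((B 0) - (A 0)) + 1 * ((C 0) - (A 0))) * ((A 1) + 1 * ((B 1) - (A 1)) + 1 * ((C 1) - (A 1))) + c * ((A 1) + 1 * ((B 1) - (A 1)) + 1 * ((C 1) - (A 1))) ^ 2 + d * ((A 0) + 1 * ((B 0) - (A 0)) + 1 * ((C 0) - (A 0))) + e * ((A 1) + 1 * ((B 1) - (A 1)) + 1 * ((C 1) - (A 1))) + f) := ⟨_, rfl⟩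
  obtain ⟨c', hc'⟩ : ∃ x : ℝ, x = (a * ((A 0) + 0 * ((B 0) - (A 0)) + 2 * ((C 0) - (A 0))) ^ 2 + b * ((A 0) + 0 * ((B 0) - (A 0)) + 2 * ((C 0) - (A 0))) * ((A 1) + 0 * ((B 1) - (A 1)) + 2 * ((C 1) - (A 1))) + c * ((A 1) + 0 * ((B 1) - (A 1)) + 2 * ((C 1) - (A 1))) ^ 2 + d * ((A 0) + 0 * ((B 0) - (A 0)) + 2 * ((C 0) - (A 0))) + e * ((A 1) + 0 * ((B 1) - (A 1)) + 2 * ((C 1) - (A 1))) + f) / 2 := ⟨_, rfl⟩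
  have L1 : (b' - a' - c') * (β * (1 - α - β)) + (-c') * ((1 - α - β) * α) + (-a') * (α * β) = 0 := by
    linear_combination hqP + (-(β ^ 2 / 2 + (1 - α - β) ^ 2 / 2 + β * (1 - α - β) - 3 * β / 2 - 3 * (1 - α - β) / 2 + 1)) * hqA + (-(-β ^ 2 - β * (1 - α - β) + 2 * β)) * hqB
      + (-(-(1 - α - β) ^ 2 - β * (1 - α - β) + 2 * (1 - α - β))) * hqC + (β * (β - 1)) * ha' + ((1 - α - β) * ((1 - α - β) - 1)) * hc' + (β * (1 - α - β)) * hb'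
  have L2 : (b' - a' - c') * ((β * ((1 - α - β) + α)) * ((1 - α - β) * (α + β))) + (-c') * (((1 - α - β) * (α + β)) * (α * (β + (1 - α - β)))) + (-a') * ((α * (β + (1 - α - β))) * (β * ((1 - α - β) + α))) = 0 := by
    linear_combination hqQ2 + (-(((β * ((1 - α - β) + α)) ^ 2 + ((1 - α - β) * (α + β)) ^ 2) / 2 + (β * ((1 - α - β) + α)) * ((1 - α - β) * (α + β)) - 3 * (α * β + β * (1 - α - β) + (1 - α - β) * α) * (β * ((1 - α - β) + α)) - 3 * (α * β + β * (1 - α - β) + (1 - α - β) * α) * ((1 - α - β) * (α + β)) + 4 * (α * β + β * (1 - α - β) + (1 - α - β) * α) ^ 2)) * hqA + (-(-(β * ((1 - α - β) + α)) ^ 2 - (β * ((1 - α - β) + α)) * ((1 - α - β) * (α + β)) + 4 * (α * β + β * (1 - α - β) + (1 - α - β) * α) * (β * ((1 - α - β) + α)))) * hqB + (-(-((1 - α - β) * (α + β)) ^ 2 - (β * ((1 - α - β) + α)) * ((1 - α - β) * (α + β)) + 4 * (α * β + β * (1 - α - β) + (1 - α - β) * α) * ((1 - α - β) * (α + β))))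 * hqC
      + (-((β * ((1 - α - β) + α)) * ((1 - α - β) * (α + β))) - (α * (β + (1 - α - β))) * (β * ((1 - α - β) + α))) * ha' + ((β * ((1 - α - β) + α)) * ((1 - α - β) * (α + β))) * hb' + (-((β * ((1 - α - β) + α)) * ((1 - α - β) * (α + β))) - ((1 - α - β) * (α + β)) * (α * (β + (1 - α - β)))) * hc'
  have hprod : α * β * (1 - α - β) ≠ 0 := mul_ne_zero (mul_ne_zero hα hβ) hγ
  have hK3ne : ((1 - α - β) * (α + β) * (β - α)) ≠ 0 := mul_ne_zero (mul_ne_zero hγ hαβ) (sub_ne_zero.mpr (Ne.symm hab))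
  have hMne : (β + (1 - α - β)) * ((1 - α - β) + α) * (α + β) ≠ 0 := mul_ne_zero (mul_ne_zero hβγ hγα) hαβ
  have rel13 : (b' - a' - c') * ((1 - α - β) * (α + β) * (β - α)) = (-a') * (α * (β + (1 - α - β)) * ((1 - α - β) - β)) := by
    apply mul_left_cancel₀ hprod
    linear_combination ((1 - α - β) * α * (α + β) * (β + (1 - α - β))) * L1 - ((1 - α - β) * α) * L2
  have rel23 : (-c') * ((1 - α - β) * (α + β) * (β - α)) = (-a') * (β * ((1 - α - β) + α) * (α - (1 - α - β))) := by
    apply mul_left_cancel₀ hprod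
    linear_combination (β * (1 - α - β)) * L2 - (β * (1 - α - β) * ((1 - α - β) + α) * (α + β)) * L1
  have h1a : (1:ℝ) - α ≠ 0 := fun hh => hβγ (by linarith)
  have h1b : (1:ℝ) - β ≠ 0 := fun hh => hγα (by linarith)
  have hΔ : (((B 0) - (A 0)) * ((C 1) - (A 1)) - ((B 1) - (A 1)) * ((C 0) - (A 0))) ≠ 0 := by
    intro hc0
    exact (affineIndependent_iff_not_collinear_set.mp hABC) ((coll_iff A B C).mpr hc0)
  have dec : ∀ Z : Pt, ∃ v w : ℝ,
      Z 0 = (A 0) + v * ((B 0) - (A 0)) + w * ((C 0) - (A 0)) ∧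
      Z 1 = (A 1) + v * ((B 1) - (A 1)) + w * ((C 1) - (A 1)) := by
    intro Z
    refine ⟨((Z 0 - (A 0)) * ((C 1) - (A 1)) - (Z 1 - (A 1)) * ((C 0) - (A 0))) / (((B 0) - (A 0)) * ((C 1) - (A 1)) - ((B 1) - (A 1)) * ((C 0) - (A 0))),
      (((B 0) - (A 0)) * (Z 1 - (A 1)) - ((B 1) - (A 1)) * (Z 0 - (A 0))) / (((B 0) - (A 0)) * ((C 1) - (A 1)) - ((B 1) - (A 1)) * ((C 0) - (A 0))), ?_, ?_⟩
    · have hinv := mul_inv_cancel₀ hΔ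
      linear_combination (-(Z 0 - (A 0))) * hinv
    · have hinv := mul_inv_cancel₀ hΔ
      linear_combination (-(Z 1 - (A 1))) * hinv
  have ha'ne : a' ≠ 0 := by
    intro h0
    have hcz' : c' = 0 := by
      have h1 : (-c') * ((1 - α - β) * (α + β) * (β - α)) = 0 := by rw [rel23, h0]; ring
      rcases mul_eq_zero.mp h1 with h2 | h2
      · linarith
      · exact absurd h2 hK3ne
    have hbz' : b' = 0 := by
      have h1 : (b' - a' - c') * ((1 - α - β) * (α + β) * (β - α)) = 0 := by rw [rel13, h0]; ring
      rcases mul_eq_zero.mp h1 with h2 | h2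
      · rw [h0, hcz'] at h2; linarith
      · exact absurd h2 hK3ne
    have hA0 : (a * ((A 0) + 2 * ((B 0) - (A 0)) + 0 * ((C 0) - (A 0))) ^ 2 + b * ((A 0) + 2 * ((B 0) - (A 0)) + 0 * ((C 0) - (A 0))) * ((A 1) + 2 * ((B 1) - (A 1)) + 0 * ((C 1) - (A 1))) + c * ((A 1) + 2 * ((B 1) - (A 1)) + 0 * ((C 1) - (A 1))) ^ 2 + d * ((A 0) + 2 * ((B 0) - (A 0)) + 0 * ((C 0) - (A 0))) + e * ((A 1) + 2 * ((B 1) - (A 1)) + 0 * ((C 1) - (A 1))) + f) / 2 = 0 := by rw [← ha']; exact h0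
    have hB0 : (a * ((A 0) + 1 * ((B 0) - (A 0)) + 1 * ((C 0) - (A 0))) ^ 2 + b * ((A 0) + 1 * ((B 0) - (A 0)) + 1 * ((C 0) - (A 0))) * ((A 1) + 1 * ((B 1) - (A 1)) + 1 * ((C 1) - (A 1))) + c * ((A 1) + 1 * ((B 1) - (A 1)) + 1 * ((C 1) - (A 1))) ^ 2 + d * ((A 0) + 1 * ((B 0) - (A 0)) + 1 * ((C 0) - (A 0))) + e * ((A 1) + 1 * ((B 1) - (A 1)) + 1 * ((C 1) - (A 1))) + f) = 0 := by rw [← hb']; exact hbz'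
    have hC0 : (a * ((A 0) + 0 * ((B 0) - (A 0)) + 2 * ((C 0) - (A 0))) ^ 2 + b * ((A 0) + 0 * ((B 0) - (A 0)) + 2 * ((C 0) - (A 0))) * ((A 1) + 0 * ((B 1) - (A 1)) + 2 * ((C 1) - (A 1))) + c * ((A 1) + 0 * ((B 1) - (A 1)) + 2 * ((C 1) - (A 1))) ^ 2 + d * ((A 0) + 0 * ((B 0) - (A 0)) + 2 * ((C 0) - (A 0))) + e * ((A 1) + 0 * ((B 1) - (A 1)) + 2 * ((C 1) - (A 1))) + f) / 2 = 0 := by rw [← hc']; exact hcz'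
    have hzero : ∀ Z : Pt, a * (Z 0) ^ 2 + b * (Z 0) * (Z 1) + c * (Z 1) ^ 2
        + d * (Z 0) + e * (Z 1) + f = 0 := by
      intro Z
      obtain ⟨v, w, hv, hw⟩ := dec Z
      rw [hv, hw]
      linear_combination (v ^ 2 / 2 + w ^ 2 / 2 + v * w - 3 * v / 2 - 3 * w / 2 + 1) * hqA + (-v ^ 2 - v * w + 2 * v) * hqB + (-w ^ 2 - v * w + 2 * w) * hqC
        + (v * (v - 1)) * hA0 + (w * (w - 1)) * hC0 + (v * w) * hB0
    have e00 : f = 0 := by have h' := hzero (0 : Pt); simpa using h'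
    have e10 := hzero (EuclideanSpace.single (0 : Fin 2) (1 : ℝ))
    have e20 := hzero (EuclideanSpace.single (0 : Fin 2) (2 : ℝ))
    have e01 := hzero (EuclideanSpace.single (1 : Fin 2) (1 : ℝ))
    have e02 := hzero (EuclideanSpace.single (1 : Fin 2) (2 : ℝ))
    have e11 := hzero (EuclideanSpace.single (0 : Fin 2) (1 : ℝ) + EuclideanSpace.single (1 : Fin 2) (1 : ℝ))
    simp [EuclideanSpace.single_apply] at e10 e20 e01 e02 e11
    have haz : a = 0 := by linear_combination (1/2 : ℝ) * e20 - e10 + (1/2 : ℝ) * e00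
    have hdz : d = 0 := by linear_combination e10 - e00 - haz
    have hcz : c = 0 := by linear_combination (1/2 : ℝ) * e02 - e01 + (1/2 : ℝ) * e00
    have hez : e = 0 := by linear_combination e01 - e00 - hcz
    have hbz : b = 0 := by linear_combination e11 - haz - hcz - hdz - hez - e00
    exact hq (by rw [haz, hbz, hcz, hdz, hez, e00])
  intro Y
  obtain ⟨v, w, hv, hw⟩ := dec Y
  have hYpt : Y = (v • (B - A) + w • (C - A)) +ᵥ A := by
    ext i
    fin_cases i
    · show Y 0 = ((v • (B - A) + w • (C - A)) +ᵥ A) 0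
      simp only [vadd_eq_add, PiLp.add_apply, PiLp.smul_apply, PiLp.sub_apply, smul_eq_mul]
      linear_combination hv
    · show Y 1 = ((v • (B - A) + w • (C - A)) +ᵥ A) 1
      simp only [vadd_eq_add, PiLp.add_apply, PiLp.smul_apply, PiLp.sub_apply, smul_eq_mul]
      linear_combination hw
  have lin1 : TP.linear (B - A) = E - D := by
    rw [← vsub_eq_sub, AffineMap.linearMap_vsub, hTPB, hTPA, vsub_eq_sub]
  have lin2 : TP.linear (C - A) = F - D := by
    rw [← vsub_eq_sub, AffineMap.linearMap_vsub, hTPC, hTPA, vsub_eq_sub]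
  have hTY : TP Y = (v • (E - D) + w • (F - D)) +ᵥ D := by
    rw [hYpt, AffineMap.map_vadd, map_add, map_smul, map_smul, lin1, lin2, hTPA]
  have hT0 : (TP Y) 0 = ((β + (1 - α - β))⁻¹ * (β * (B 0) + (1 - α - β) * (C 0))) + v * ((((1 - α - β) + α)⁻¹ * (α * (A 0) + (1 - α - β) * (C 0))) - ((β + (1 - α - β))⁻¹ * (β * (B 0) + (1 - α - β) * (C 0)))) + w * (((α + β)⁻¹ * (α * (A 0) + β * (B 0))) - ((β + (1 - α - β))⁻¹ * (β * (B 0) + (1 - α - β) * (C 0)))) := by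
    rw [hTY, hD, hE, hF]
    simp only [vadd_eq_add, PiLp.add_apply, PiLp.smul_apply, PiLp.sub_apply, smul_eq_mul]
    ring
  have hT1 : (TP Y) 1 = ((β + (1 - α - β))⁻¹ * (β * (B 1) + (1 - α - β) * (C 1))) + v * ((((1 - α - β) + α)⁻¹ * (α * (A 1) + (1 - α - β) * (C 1))) - ((β + (1 - α - β))⁻¹ * (β * (B 1) + (1 - α - β) * (C 1)))) + w * (((α + β)⁻¹ * (α * (A 1) + β * (B 1))) - ((β + (1 - α - β))⁻¹ * (β * (B 1) + (1 - α - β) * (C 1)))) := by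
    rw [hTY, hD, hE, hF]
    simp only [vadd_eq_add, PiLp.add_apply, PiLp.smul_apply, PiLp.sub_apply, smul_eq_mul]
    ring
  have hdetK : (β + (1 - α - β)) * (((1 - α - β)) + α) * (α + β) * ((Y 0 - P 0) * ((TP Y) 1 - P 1) - (Y 1 - P 1) * ((TP Y) 0 - P 0)) = -((((B 0) - (A 0)) * ((C 1) - (A 1)) - ((B 1) - (A 1)) * ((C 0) - (A 0))) * ((α * (β + (1 - α - β)) * ((1 - α - β) - β)) * (v * w) + (β * ((1 - α - β) + α) * (α - (1 - α - β))) * (w * (1 - v - w)) + ((1 - α - β) * (α + β) * (β - α)) * ((1 - v - w) * v))) := by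
    rw [hT0, hT1, hv, hw, hP0, hP1]
    field_simp
    ring
  have hS1 : ((1 - α - β) * (α + β) * (β - α)) * (a * ((A 0) + v * ((B 0) - (A 0)) + w * ((C 0) - (A 0))) ^ 2 + b * ((A 0) + v * ((B 0) - (A 0)) + w * ((C 0) - (A 0))) * ((A 1) + v * ((B 1) - (A 1)) + w * ((C 1) - (A 1))) + c * ((A 1) + v * ((B 1) - (A 1)) + w * ((C 1) - (A 1))) ^ 2 + d * ((A 0) + v * ((B 0) - (A 0)) + w * ((C 0) - (A 0))) + e * ((A 1) + v * ((B 1) - (A 1)) + w * ((C 1) - (A 1))) + f) = (-a') * ((α * (β + (1 - α - β)) * ((1 - α - β) - β)) * (v * w) + (β * ((1 - α - β) + α) * (α - (1 - α - β))) * (w * (1 - v - w)) + ((1 - α - β) * (α + β) * (β - α)) * ((1 - v - w) * v)) := by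
    linear_combination ((1 - α - β) * (α + β) * (β - α)) * ((v ^ 2 / 2 + w ^ 2 / 2 + v * w - 3 * v / 2 - 3 * w / 2 + 1) * hqA + (-v ^ 2 - v * w + 2 * v) * hqB + (-w ^ 2 - v * w + 2 * w) * hqC
      - (v * (v - 1)) * ha' - (w * (w - 1)) * hc' - (v * w) * hb')
      + (v * w) * rel13 + (w * (1 - v - w)) * rel23
  rw [coll_iff]
  constructor
  · intro h
    have hHq : (a * ((A 0) + v * ((B 0) - (A 0)) + w * ((C 0) - (A 0))) ^ 2 + b * ((A 0) + v * ((B 0) - (A 0)) + w * ((C 0) - (A 0))) * ((A 1) + v * ((B 1) - (A 1)) + w * ((C 1) - (A 1))) + c * ((A 1) + v * ((B 1) - (A 1)) + w * ((C 1) - (A 1))) ^ 2 + d * ((A 0) + v * ((B 0) - (A 0)) + w * ((C 0) - (A 0))) + e * ((A 1) + v * ((B 1) - (A 1)) + w * ((C 1) - (A 1))) + f) = 0 := by rw [← hv, ← hw]; exact h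
    have hK : ((α * (β + (1 - α - β)) * ((1 - α - β) - β)) * (v * w) + (β * ((1 - α - β) + α) * (α - (1 - α - β))) * (w * (1 - v - w)) + ((1 - α - β) * (α + β) * (β - α)) * ((1 - v - w) * v)) = 0 := by
      have h2 : (-a') * ((α * (β + (1 - α - β)) * ((1 - α - β) - β)) * (v * w) + (β * ((1 - α - β) + α) * (α - (1 - α - β))) * (w * (1 - v - w)) + ((1 - α - β) * (α + β) * (β - α)) * ((1 - v - w) * v)) = 0 := by rw [← hS1, hHq, mul_zero]
      rcases mul_eq_zero.mp h2 with h3 | h3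
      · exact absurd (neg_eq_zero.mp h3) ha'ne
      · exact h3
    have h4 : (β + (1 - α - β)) * (((1 - α - β)) + α) * (α + β) * ((Y 0 - P 0) * ((TP Y) 1 - P 1) - (Y 1 - P 1) * ((TP Y) 0 - P 0)) = 0 := by
      rw [hdetK, hK]; ring
    rcases mul_eq_zero.mp h4 with h5 | h5
    · exact absurd h5 hMne
    · exact h5
  · intro h
    have h4 : -((((B 0) - (A 0)) * ((C 1) - (A 1)) - ((B 1) - (A 1)) * ((C 0) - (A 0))) * ((α * (β + (1 - α - β)) * ((1 - α - β) - β)) * (v * w) + (β * ((1 - α - β) + α) * (α - (1 - α - β))) * (w * (1 - v - w)) + ((1 - α - β) * (α + β) * (β - α)) * ((1 - v - w) * v))) = 0 := by rw [← hdetK, h, mul_zero]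
    have hK : ((α * (β + (1 - α - β)) * ((1 - α - β) - β)) * (v * w) + (β * ((1 - α - β) + α) * (α - (1 - α - β))) * (w * (1 - v - w)) + ((1 - α - β) * (α + β) * (β - α)) * ((1 - v - w) * v)) = 0 := by
      rcases mul_eq_zero.mp (neg_eq_zero.mp h4) with h5 | h5
      · exact absurd h5 hΔ
      · exact h5
    have hHq0 : ((1 - α - β) * (α + β) * (β - α)) * (a * ((A 0) + v * ((B 0) - (A 0)) + w * ((C 0) - (A 0))) ^ 2 + b * ((A 0) + v * ((B 0) - (A 0)) + w * ((C 0) - (A 0))) * ((A 1) + v * ((B 1) - (A 1)) + w * ((C 1) - (A 1))) + c * ((A 1) + v * ((B 1) - (A 1)) + w * ((C 1) - (A 1))) ^ 2 + d * ((A 0) + v * ((B 0) - (A 0)) + w * ((C 0) - (A 0))) + e * ((A 1) + v * ((B 1) - (A 1)) + w * ((C 1) - (A 1))) + f) = 0 := by rw [hS1, hK, mul_zero]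
    have hHq : (a * ((A 0) + v * ((B 0) - (A 0)) + w * ((C 0) - (A 0))) ^ 2 + b * ((A 0) + v * ((B 0) - (A 0)) + w * ((C 0) - (A 0))) * ((A 1) + v * ((B 1) - (A 1)) + w * ((C 1) - (A 1))) + c * ((A 1) + v * ((B 1) - (A 1)) + w * ((C 1) - (A 1))) ^ 2 + d * ((A 0) + v * ((B 0) - (A 0)) + w * ((C 0) - (A 0))) + e * ((A 1) + v * ((B 1) - (A 1)) + w * ((C 1) - (A 1))) + f) = 0 := by
      rcases mul_eq_zero.mp hHq0 with h5 | h5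
      · exact absurd h5 hK3ne
      · exact h5
    rw [hv, hw]
    exact hHq
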